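/- Let m > 1 be a positive integer. Then there is no ternary linear code with parameters [3^m, 3^m − 2m − 1, 6]; that is, every linear code over F_3 of length 3^m and dimension 3^m − 2m − 1 has minimum Hamming distance at most 5. -/

import Mathlib

noncomputable section
open scoped Classical

open Finset

/-- Number of vectors in `(ZMod 3)^n` with a prescribed support `s`. -/
lemma stmt19_card_supp (n : ℕ) (s : Finset (Fin n)) :
    (Finset.univ.filter fun f : Fin n → ZMod 3 =>
        (Finset.univ.filter fun i => f i ≠ 0) = s).card = 2 ^ s.card := by
  rw [← Fintype.card_subtype]
  have e : {f : Fin n → ZMod 3 // (Finset.univ.filter fun i => f i ≠ 0) = s}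
      ≃ (s → {x : ZMod 3 // x ≠ 0}) :=
    { toFun := fun f j => ⟨f.1 j, by
        have h := f.2
        have : (j : Fin n) ∈ Finset.univ.filter fun i => f.1 i ≠ 0 := by rw [h]; exact j.2
        simpa using this⟩
      invFun := fun g => ⟨fun i => if h : i ∈ s then (g ⟨i, h⟩).1 else 0, by
        ext i
        simp only [mem_filter, mem_univ, true_and]
        constructor
        · intro hi; by_contra hs; simp [hs] at hi
        · intro hi; simp [hi]; exact (g ⟨i, hi⟩).2⟩
      left_inv := fun f => by
        ext i
        dsimp
        split_ifs with h
        · rfl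
        · have h2 := f.2
          by_contra hne
          have : i ∈ Finset.univ.filter fun j => f.1 j ≠ 0 := by simpa using (Ne.symm hne)
          rw [h2] at this; exact h this
      right_inv := fun g => by
        ext j
        simp [j.2] }
  rw [Fintype.card_congr e, Fintype.card_fun]
  simp [Finset.card_univ]

/-- Number of vectors in `(ZMod 3)^n` of Hamming weight exactly `w`. -/
lemma stmt19_card_wt (n w : ℕ) :
    (Finset.univ.filter fun f : Fin n → ZMod 3 => hammingNorm f = w).card
      = n.choose w * 2 ^ w := by
  have hn : ∀ f : Fin n → ZMod 3, hammingNorm f = (Finset.univ.filter fun i => f i ≠ 0).card :=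
    fun _ => rfl
  rw [card_eq_sum_card_fiberwise (f := fun f : Fin n → ZMod 3 =>
      (Finset.univ.filter fun i => f i ≠ 0)) (t := Finset.univ.powersetCard w)]
  · have : ∀ s ∈ Finset.univ.powersetCard w,
        ((Finset.univ.filter fun f : Fin n → ZMod 3 => hammingNorm f = w).filter
          (fun f => (Finset.univ.filter fun i => f i ≠ 0) = s)).card = 2 ^ w := by
      intro s hs
      rw [mem_powersetCard] at hs
      rw [filter_filter]
      have : ∀ f : Fin n → ZMod 3,
          (hammingNorm f = w ∧ (Finset.univ.filter fun i => f i ≠ 0) = s)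
            ↔ (Finset.univ.filter fun i => f i ≠ 0) = s := by
        intro f
        constructor
        · exact fun h => h.2
        · intro h; exact ⟨by rw [hn f, h, hs.2], h⟩
      rw [filter_congr (fun f _ => this f), stmt19_card_supp, hs.2]
    rw [Finset.sum_congr rfl this, Finset.sum_const, card_powersetCard]
    simp [Finset.card_univ]
  · intro x hx
    rw [mem_coe, mem_filter] at hx
    rw [mem_coe, mem_powersetCard]; dsimp only
    exact ⟨subset_univ _, by rw [← hn x]; exact hx.2⟩

lemma stmt19_pow_aux (m : ℕ) : 2 * m + 1 ≤ 3 ^ m := by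
  induction m with
  | zero => simp
  | succ k ih =>
    have h3 : 3 * (2 * k + 1) ≤ 3 * 3 ^ k := Nat.mul_le_mul_left 3 ih
    have hp : (3 : ℕ) ^ (k + 1) = 3 * 3 ^ k := by ring
    omega

/-- The core counting argument. -/
lemma stmt19_aux (n : ℕ) (hn9 : 9 ≤ n) (C : Submodule (ZMod 3) (Fin n → ZMod 3))
    (hQ : Fintype.card ((Fin n → ZMod 3) ⧸ C) = 3 * n ^ 2)
    (hcon : ∀ v ∈ C, v ≠ 0 → 5 < hammingNorm v) : False := by
  set σ := C.mkQ with hσ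
  have hker : ∀ x : Fin n → ZMod 3, σ x = 0 ↔ x ∈ C := fun x => Submodule.Quotient.mk_eq_zero C
  have hsub : ∀ x y : Fin n → ZMod 3, σ x = σ y → hammingNorm (x - y) ≤ 5 → x = y := by
    intro x y hxy hw
    have hC : x - y ∈ C := by rw [← hker, map_sub, hxy, sub_self]
    by_contra hne
    exact absurd hw (not_le.mpr (hcon _ hC (sub_ne_zero.mpr (fun h => hne h))))
  have wtsub : ∀ x y : Fin n → ZMod 3,
      hammingNorm (x - y) ≤ hammingNorm x + hammingNorm y := by
    intro x y
    rw [show hammingNorm (x - y) = hammingDist x y by simp [hammingDist, hammingNorm, sub_ne_zero]]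
    calc hammingDist x y ≤ hammingDist x 0 + hammingDist 0 y := hammingDist_triangle x 0 y
    _ = hammingNorm x + hammingNorm y := by rw [hammingDist_zero_right, hammingDist_zero_left]
  set S2 : Finset (Fin n → ZMod 3) := Finset.univ.filter fun f => hammingNorm f ≤ 2 with hS2
  set S3 : Finset (Fin n → ZMod 3) := Finset.univ.filter fun f => hammingNorm f = 3 with hS3
  -- injectivity of σ on S2
  have hinj : Set.InjOn σ S2 := by
    intro x hx y hy hxy
    simp only [hS2, Finset.coe_filter, Set.mem_setOf_eq, mem_univ, true_and] at hx hy
    exact hsub x y hxy (le_trans (wtsub x y) (by omega))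
  have himg2 : (S2.image σ).card = S2.card := Finset.card_image_of_injOn hinj
  -- images of S3 and S2 are disjoint
  have hdisj : Disjoint (S3.image σ) (S2.image σ) := by
    rw [Finset.disjoint_left]
    intro q h3 h2
    obtain ⟨x, hx, hxq⟩ := mem_image.mp h3
    obtain ⟨y, hy, hyq⟩ := mem_image.mp h2
    simp only [hS3, hS2, mem_filter, mem_univ, true_and] at hx hy
    have hxy := hsub x y (hxq.trans hyq.symm) (le_trans (wtsub x y) (by omega))
    rw [hxy] at hx
    omega
  -- fibers of σ on S3 have at most n/3 elements
  have hfib : ∀ q, 3 * ((S3.filter fun x => σ x = q).card) ≤ n := by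
    intro q
    set F := S3.filter fun x => σ x = q with hF
    have hmem : ∀ x ∈ F, hammingNorm x = 3 ∧ σ x = q := by
      intro x hx
      simp only [hF, hS3, mem_filter, mem_univ, true_and] at hx
      exact hx
    have hds : ∀ x ∈ F, ∀ y ∈ F, x ≠ y →
        Disjoint (Finset.univ.filter fun i => x i ≠ 0)
          (Finset.univ.filter fun i => y i ≠ 0) := by
      intro x hx y hy hne
      obtain ⟨hx3, hxq⟩ := hmem x hx
      obtain ⟨hy3, hyq⟩ := hmem y hy
      have hC : x - y ∈ C := by rw [← hker, map_sub, hxq, hyq, sub_self]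
      have h6 : 5 < hammingNorm (x - y) := hcon _ hC (sub_ne_zero.mpr hne)
      have hsub6 : (Finset.univ.filter fun i => (x - y) i ≠ 0)
          ⊆ (Finset.univ.filter fun i => x i ≠ 0) ∪ (Finset.univ.filter fun i => y i ≠ 0) := by
        intro i hi
        simp only [mem_filter, mem_union, mem_univ, true_and, Pi.sub_apply] at hi ⊢
        by_contra hcc
        push_neg at hcc
        apply hi
        rw [hcc.1, hcc.2, sub_zero]
      have hwt : hammingNorm (x - y)
          = (Finset.univ.filter fun i => (x - y) i ≠ 0).card := rfl
      have hcard6 : 6 ≤ ((Finset.univ.filter fun i => x i ≠ 0)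
          ∪ (Finset.univ.filter fun i => y i ≠ 0)).card := by
        have := card_le_card hsub6
        omega
      have hx3' : (Finset.univ.filter fun i => x i ≠ 0).card = 3 := hx3
      have hy3' : (Finset.univ.filter fun i => y i ≠ 0).card = 3 := hy3
      have hle : ((Finset.univ.filter fun i => x i ≠ 0)
          ∪ (Finset.univ.filter fun i => y i ≠ 0)).card
          ≤ (Finset.univ.filter fun i => x i ≠ 0).card
            + (Finset.univ.filter fun i => y i ≠ 0).card := card_union_le _ _
      have heq : ((Finset.univ.filter fun i => x i ≠ 0)
          ∪ (Finset.univ.filter fun i => y i ≠ 0)).card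
          = (Finset.univ.filter fun i => x i ≠ 0).card
            + (Finset.univ.filter fun i => y i ≠ 0).card := by omega
      exact Finset.card_union_eq_card_add_card.mp heq
    have hbi : (F.biUnion fun x => Finset.univ.filter fun i => x i ≠ 0).card
        = ∑ x ∈ F, (Finset.univ.filter fun i => x i ≠ 0).card := Finset.card_biUnion hds
    have hsum3 : ∑ x ∈ F, (Finset.univ.filter fun i => x i ≠ 0).card = 3 * F.card := by
      have he : ∑ x ∈ F, (Finset.univ.filter fun i => x i ≠ 0).card = ∑ _x ∈ F, 3 :=
        Finset.sum_congr rfl (fun x hx => (hmem x hx).1)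
      rw [he, Finset.sum_const, smul_eq_mul]
      ring
    have hlen : (F.biUnion fun x => Finset.univ.filter fun i => x i ≠ 0).card ≤ n := by
      have h := Finset.card_le_univ (F.biUnion fun x => Finset.univ.filter fun i => x i ≠ 0)
      simpa using h
    rw [← hsum3, ← hbi]
    exact hlen
  -- the fiberwise count of S3
  have hsum : S3.card = ∑ q ∈ S3.image σ, (S3.filter fun x => σ x = q).card :=
    card_eq_sum_card_fiberwise (fun x hx => mem_image_of_mem σ hx)
  have hmain : 3 * S3.card ≤ (S3.image σ).card * n := by
    rw [hsum, Finset.mul_sum]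
    calc ∑ q ∈ S3.image σ, 3 * (S3.filter fun x => σ x = q).card
        ≤ ∑ _q ∈ S3.image σ, n := Finset.sum_le_sum (fun q _ => hfib q)
    _ = (S3.image σ).card * n := by rw [Finset.sum_const, smul_eq_mul]
  -- space bound
  have hspace : (S3.image σ).card + S2.card ≤ 3 * n ^ 2 := by
    rw [← himg2, ← Finset.card_union_of_disjoint hdisj, ← hQ, ← Finset.card_univ]
    exact Finset.card_le_univ _
  -- cardinalities of S2 and S3
  have h3card : S3.card = n.choose 3 * 8 := by
    rw [hS3, stmt19_card_wt]
    norm_num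
  have h2card : S2.card = 1 + n * 2 + n.choose 2 * 4 := by
    rw [hS2]
    rw [card_eq_sum_card_fiberwise (f := hammingNorm) (t := Finset.range 3)
      (fun x hx => by rw [mem_coe, mem_filter] at hx; rw [mem_coe, mem_range]; omega)]
    have hfe : ∀ w ∈ Finset.range 3,
        ((Finset.univ.filter fun f : Fin n → ZMod 3 => hammingNorm f ≤ 2).filter
          (fun f => hammingNorm f = w)).card = n.choose w * 2 ^ w := by
      intro w hw
      rw [mem_range] at hw
      rw [filter_filter]
      rw [filter_congr (fun f _ => by
        constructor
        · exact fun h => h.2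
        · intro h; exact ⟨by omega, h⟩)]
      exact stmt19_card_wt n w
    rw [Finset.sum_congr rfl hfe]
    rw [Finset.sum_range_succ, Finset.sum_range_succ, Finset.sum_range_one]
    simp [Nat.choose_one_right]
  -- arithmetic conclusion
  set t := (S3.image σ).card with ht
  have e2 : n.choose 2 * 2 = n * (n - 1) := by
    have h := Nat.choose_succ_right_eq n 1
    simpa [Nat.choose_one_right] using h
  have e3 : n.choose 3 * 3 = n.choose 2 * (n - 2) := Nat.choose_succ_right_eq n 2
  obtain ⟨p, hp⟩ : ∃ p, n = p + 1 := ⟨n - 1, by omega⟩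
  obtain ⟨q, hq⟩ : ∃ q, n = q + 2 := ⟨n - 2, by omega⟩
  have e2' : n.choose 2 * 2 = n * p := by rw [e2]; congr 1; omega
  have e3' : n.choose 3 * 6 = n * p * q := by
    have h1 : n.choose 3 * 6 = (n.choose 3 * 3) * 2 := by ring
    rw [h1, e3]
    have h2 : n - 2 = q := by omega
    rw [h2]
    calc n.choose 2 * q * 2 = (n.choose 2 * 2) * q := by ring
    _ = n * p * q := by rw [e2']
  rw [h3card] at hmain
  rw [h2card] at hspace
  have hA : n.choose 3 * 24 ≤ t * n := by
    calc n.choose 3 * 24 = 3 * (n.choose 3 * 8) := by ring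
    _ ≤ t * n := hmain
  have hB : (t + (1 + n * 2 + n.choose 2 * 4)) * n ≤ 3 * n ^ 2 * n :=
    Nat.mul_le_mul_right n hspace
  have hC2 : n.choose 2 * 4 * n = 2 * (n * p) * n := by
    calc n.choose 2 * 4 * n = (n.choose 2 * 2) * 2 * n := by ring
    _ = 2 * (n * p) * n := by rw [e2']; ring
  have hC3 : n.choose 3 * 24 = 4 * (n * p * q) := by
    calc n.choose 3 * 24 = (n.choose 3 * 6) * 4 := by ring
    _ = 4 * (n * p * q) := by rw [e3']; ring
  rw [hC3] at hA
  have hfinal : 4 * (n * p * q) + (1 + n * 2 + n.choose 2 * 4) * n ≤ 3 * n ^ 2 * n := by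
    have expand : (t + (1 + n * 2 + n.choose 2 * 4)) * n
        = t * n + (1 + n * 2 + n.choose 2 * 4) * n := by ring
    rw [expand] at hB
    omega
  rw [show (1 + n * 2 + n.choose 2 * 4) * n
      = n + n * 2 * n + n.choose 2 * 4 * n by ring, hC2] at hfinal
  nlinarith [hfinal, hp, hq, hn9]

/-- For `m > 1` there is no ternary linear code with parameters
`[3^m, 3^m − 2m − 1, 6]`: every linear code over `F_3` of length `3^m` and dimension
`3^m − 2m − 1` contains a nonzero codeword of Hamming weight at most `5`. -/
theorem stmt_19 (m : ℕ) (hm : 1 < m)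
    (C : Submodule (ZMod 3) (Fin (3 ^ m) → ZMod 3))
    (hdim : Module.finrank (ZMod 3) C = 3 ^ m - 2 * m - 1) :
    ∃ v ∈ C, v ≠ 0 ∧ hammingNorm v ≤ 5 := by
  by_contra hcon
  push_neg at hcon
  have hn9 : 9 ≤ 3 ^ m := by
    calc (9 : ℕ) = 3 ^ 2 := rfl
    _ ≤ 3 ^ m := Nat.pow_le_pow_right (by norm_num) hm
  have hr : 2 * m + 1 ≤ 3 ^ m := stmt19_pow_aux m
  refine stmt19_aux (3 ^ m) hn9 C ?_ hcon
  rw [Module.card_eq_pow_finrank (K := ZMod 3)]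
  have h1 : Module.finrank (ZMod 3) ((Fin (3 ^ m) → ZMod 3) ⧸ C)
      + Module.finrank (ZMod 3) C = 3 ^ m := by
    rw [Submodule.finrank_quotient_add_finrank]; simp [Module.finrank_pi]
  rw [hdim] at h1
  have h2 : Module.finrank (ZMod 3) ((Fin (3 ^ m) → ZMod 3) ⧸ C) = 2 * m + 1 := by omega
  rw [h2]
  have h3 : Fintype.card (ZMod 3) = 3 := by simp [ZMod.card]
  rw [h3]
  ring
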